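/- arXiv:math/0509688 — 2 statements merged into one kernel-verified Lean document; each statement's English description precedes it below -/
import Mathlib

section
/- Let M and N be two (p-1)×(p-1) matrices over ℤ[1/n] and let α = (α₁,…,α_{p-1})ᵀ ∈ ℤ[1/n][ξ]^{p-1}, where α₁,…,α_{p-1} are ℤ[1/n]-linearly independent. If αᵀ M ᾱ^{(i)} = αᵀ N ᾱ^{(i)} for all i = 1,…,p-1, then M = N. -/
open scoped ComplexConjugate

noncomputable section

/-- The subring `ℤ[1/n]` of `ℂ`. -/
def Rz (n : ℤ) : Subring ℂ := Subring.closure {((n : ℂ))⁻¹}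

/-- The subring `ℤ[1/n][x]` of `ℂ`. -/
def Rzx (n : ℤ) (x : ℂ) : Subring ℂ := Subring.closure {((n : ℂ))⁻¹, x}

lemma mem_Rzx (n : ℤ) (x : ℂ) : x ∈ Rzx n x :=
  Subring.subset_closure (Set.mem_insert_of_mem _ rfl)

/-- Let `p` be an odd prime, `ξ` a primitive `p`-th root of unity and
`0 ≠ n ∈ ℤ`.  For `1 ≤ j ≤ p-1`, `γ j : ℤ[1/n][ξ] →+* ℂ` denotes the Galois embedding
determined by `ξ ↦ ξ^j` (so that the `i`-th conjugate `x̄^{(i)}` of `x̄` is `conj (γ i x)`,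
since conjugation commutes with the Galois action).
If `M`, `N` are `(p-1) × (p-1)` matrices with entries in `ℤ[1/n]` and
`α = (α₁, …, α_{p-1})ᵀ ∈ ℤ[1/n][ξ]^{p-1}` has `ℤ[1/n]`-linearly independent entries with
`αᵀ M ᾱ^{(i)} = αᵀ N ᾱ^{(i)}` for `i = 1, …, p-1`, then `M = N`. -/
theorem stmt0 (p : ℕ) (hp : p.Prime) (hodd : Odd p) (n : ℤ) (hn : n ≠ 0)
    (ξ : ℂ) (hξ : IsPrimitiveRoot ξ p)
    (γ : ℕ → (↥(Rzx n ξ) →+* ℂ))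
    (hγ : ∀ j ∈ Finset.Icc 1 (p - 1), γ j ⟨ξ, mem_Rzx n ξ⟩ = ξ ^ j)
    (M N : Matrix (Fin (p - 1)) (Fin (p - 1)) ℂ)
    (hM : ∀ k l, M k l ∈ Rz n) (hN : ∀ k l, N k l ∈ Rz n)
    (α : Fin (p - 1) → ↥(Rzx n ξ))
    (hind : ∀ c : Fin (p - 1) → ℂ, (∀ k, c k ∈ Rz n) →
      (∑ k, c k * (α k : ℂ)) = 0 → ∀ k, c k = 0)
    (heq : ∀ i ∈ Finset.Icc 1 (p - 1),
      (∑ k, ∑ l, (α k : ℂ) * M k l * (starRingEnd ℂ) (γ i (α l))) =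
      (∑ k, ∑ l, (α k : ℂ) * N k l * (starRingEnd ℂ) (γ i (α l)))) :
    M = N := by
  classical
  have hp2 : 2 ≤ p := hp.two_le
  have hppos : 0 < p := hp.pos
  haveI : Nonempty (Fin (p - 1)) := ⟨⟨0, by omega⟩⟩
  set τ : ℕ → (↥(Rzx n ξ) →+* ℂ) := fun i => (starRingEnd ℂ).comp (γ i) with hτdef
  have hmem : ∀ i : Fin (p - 1), (i : ℕ) + 1 ∈ Finset.Icc 1 (p - 1) := fun i => by
    have := i.isLt; simp only [Finset.mem_Icc]; omega
  -- the vector c = αᵀ (M - N)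
  set c : Fin (p - 1) → ℂ := fun l => ∑ k, (α k : ℂ) * (M k l - N k l) with hcdef
  -- transform heq
  have h0 : ∀ i ∈ Finset.Icc 1 (p - 1), ∑ l, c l * τ i (α l) = 0 := by
    intro i hi
    have h := heq i hi
    have h1 : ∑ l, c l * τ i (α l)
        = (∑ l, ∑ k, (α k : ℂ) * M k l * τ i (α l))
          - (∑ l, ∑ k, (α k : ℂ) * N k l * τ i (α l)) := by
      rw [← Finset.sum_sub_distrib]
      refine Finset.sum_congr rfl fun l _ => ?_
      rw [← Finset.sum_sub_distrib, hcdef, Finset.sum_mul]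
      exact Finset.sum_congr rfl fun k _ => by ring
    have hcomm : ∀ B : Matrix (Fin (p-1)) (Fin (p-1)) ℂ,
        ∑ l, ∑ k, (α k : ℂ) * B k l * τ i (α l)
          = ∑ k, ∑ l, (α k : ℂ) * B k l * τ i (α l) := fun B => Finset.sum_comm
    rw [h1, hcomm M, hcomm N, sub_eq_zero]
    exact h
  -- setup field K
  set P : ℕ+ := ⟨p, hppos⟩ with hP
  have hξ' : IsPrimitiveRoot ξ (P : ℕ) := hξ
  have hint : IsIntegral ℚ ξ := (hξ.isIntegral hppos).tower_top
  set K := IntermediateField.adjoin ℚ ({ξ} : Set ℂ) with hK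
  have hcyc : IsCyclotomicExtension {(P : ℕ)} ℚ K := by
    have H := IntermediateField.adjoin_simple_toSubalgebra_of_isAlgebraic hint.isAlgebraic
    refine IsCyclotomicExtension.equiv _ _ _ (h := ?_) (.refl : K.toSubalgebra ≃ₐ[ℚ] _)
    rw [hK, H]
    exact hξ'.adjoin_isCyclotomicExtension ℚ
  haveI := IsCyclotomicExtension.finiteDimensional {(P : ℕ)} ℚ K
  have hrank : Module.finrank ℚ K = p - 1 := by
    rw [IsCyclotomicExtension.finrank (n := (P : ℕ)) K (Polynomial.cyclotomic.irreducible_rat P.pos)]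
    exact Nat.totient_prime hp
  have hsub : Rzx n ξ ≤ K.toSubring := by
    rw [Rzx, Subring.closure_le]
    refine Set.insert_subset_iff.2 ⟨?_, Set.singleton_subset_iff.2 ?_⟩
    · have h9 : ((n : ℂ))⁻¹ = algebraMap ℚ ℂ ((n : ℚ))⁻¹ := by simp
      rw [h9]
      exact K.algebraMap_mem _
    · exact IntermediateField.mem_adjoin_simple_self ℚ ξ
  set A : Fin (p - 1) → K := fun l => ⟨(α l : ℂ), hsub (α l).2⟩ with hAdef
  -- linear independence of A over ℚ
  have hAZ : LinearIndependent ℤ A := by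
    rw [Fintype.linearIndependent_iff]
    intro g hg
    have h2 := congrArg (algebraMap K ℂ) hg
    rw [map_sum, map_zero] at h2
    simp only [map_zsmul, zsmul_eq_mul] at h2
    have h3 : ∑ k, ((g k : ℂ)) * (α k : ℂ) = 0 := by
      refine Eq.trans (Finset.sum_congr rfl fun k _ => ?_) h2
      rfl
    intro k
    have := hind (fun k => (g k : ℂ)) (fun k => by
      exact_mod_cast intCast_mem (Rz n) (g k)) h3 k
    exact_mod_cast this
  have hAQ : LinearIndependent ℚ A := (LinearIndependent.iff_fractionRing ℤ ℚ).1 hAZ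
  have hcard : Fintype.card (Fin (p - 1)) = Module.finrank ℚ K := by simp [hrank]
  set b : Module.Basis (Fin (p - 1)) ℚ K := basisOfLinearIndependentOfCardEqFinrank hAQ hcard with hbdef
  have hbA : ⇑b = A := coe_basisOfLinearIndependentOfCardEqFinrank _ _
  -- spanning with integer denominators
  have hspan : ∀ x : ↥(Rzx n ξ), ∃ d : ℤ, d ≠ 0 ∧ ∃ m : Fin (p - 1) → ℤ,
      (d • x : ↥(Rzx n ξ)) = ∑ l, m l • α l := by
    intro x
    set xK : K := ⟨(x : ℂ), hsub x.2⟩ with hxK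
    obtain ⟨dd, hdd⟩ := IsLocalization.exist_integer_multiples_of_finite
      (nonZeroDivisors ℤ) (fun l => b.repr xK l)
    choose m hm using hdd
    refine ⟨(dd : ℤ), nonZeroDivisors.coe_ne_zero dd, m, ?_⟩
    have hxsum : ∑ l, b.repr xK l • A l = xK := by
      conv_rhs => rw [← b.sum_repr xK]
      rw [hbA]
    have hKeq : ((dd : ℤ) • xK : K) = ∑ l, m l • A l := by
      rw [← hxsum, Finset.smul_sum]
      refine Finset.sum_congr rfl fun l _ => ?_
      rw [← smul_assoc]
      have h7 : ((m l : ℚ)) = (dd : ℤ) • b.repr xK l := hm l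
      rw [← h7, Int.cast_smul_eq_zsmul]
    -- deduce the equation in Rzx from the one in K
    apply Subtype.ext
    have h8 := congrArg (fun y : K => (y : ℂ)) hKeq
    simpa [AddSubgroupClass.coe_zsmul, AddSubmonoidClass.coe_finset_sum] using h8
  -- the matrix of conjugates
  set T : Matrix (Fin (p - 1)) (Fin (p - 1)) ℂ := fun i l => τ ((i : ℕ) + 1) (α l) with hTdef
  -- rows of T are linearly independent (Dedekind)
  have hrows : LinearIndependent ℂ (fun i => T i) := by
    rw [Fintype.linearIndependent_iff]
    intro g hg
    have hg' : ∀ l, ∑ i, g i * τ ((i : ℕ) + 1) (α l) = 0 := by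
      intro l
      have h5 := congrFun hg l
      simpa using h5
    have hall : ∀ x : ↥(Rzx n ξ), ∑ i, g i * τ ((i : ℕ) + 1) x = 0 := by
      intro x
      obtain ⟨d, hd, m, hdx⟩ := hspan x
      have h6 : ∀ i : Fin (p - 1), τ ((i : ℕ) + 1) (d • x)
          = ∑ l, (m l : ℂ) * τ ((i : ℕ) + 1) (α l) := by
        intro i
        rw [hdx, map_sum]
        exact Finset.sum_congr rfl fun l _ => by rw [map_zsmul, zsmul_eq_mul]
      have h7 : ∑ i, g i * τ ((i : ℕ) + 1) (d • x)
          = ∑ l, (m l : ℂ) * (∑ i, g i * τ ((i : ℕ) + 1) (α l)) := by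
        calc ∑ i, g i * τ ((i : ℕ) + 1) (d • x)
            = ∑ i, ∑ l, (m l : ℂ) * (g i * τ ((i : ℕ) + 1) (α l)) := by
              refine Finset.sum_congr rfl fun i _ => ?_
              rw [h6 i, Finset.mul_sum]
              exact Finset.sum_congr rfl fun l _ => by ring
          _ = ∑ l, ∑ i, (m l : ℂ) * (g i * τ ((i : ℕ) + 1) (α l)) := Finset.sum_comm
          _ = ∑ l, (m l : ℂ) * (∑ i, g i * τ ((i : ℕ) + 1) (α l)) :=
              Finset.sum_congr rfl fun l _ => (Finset.mul_sum _ _ _).symm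
      have h8 : ∑ i, g i * τ ((i : ℕ) + 1) (d • x) = (d : ℂ) * ∑ i, g i * τ ((i : ℕ) + 1) x := by
        rw [Finset.mul_sum]
        refine Finset.sum_congr rfl fun i _ => ?_
        rw [map_zsmul, zsmul_eq_mul]
        ring
      have h9 : (d : ℂ) * ∑ i, g i * τ ((i : ℕ) + 1) x = 0 := by
        rw [← h8, h7]
        simp [hg']
      have hd' : (d : ℂ) ≠ 0 := Int.cast_ne_zero.2 hd
      exact (mul_eq_zero.1 h9).resolve_left hd'
    -- Dedekind's independence of characters
    have hinj : Function.Injective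
        (fun i : Fin (p - 1) => (τ ((i : ℕ) + 1)).toMonoidHom) := by
      intro i j hij
      have h1 : τ ((i : ℕ) + 1) ⟨ξ, mem_Rzx n ξ⟩ = τ ((j : ℕ) + 1) ⟨ξ, mem_Rzx n ξ⟩ :=
        congrArg (fun f => f ⟨ξ, mem_Rzx n ξ⟩) hij
      have h2 : (starRingEnd ℂ) (ξ ^ ((i : ℕ) + 1)) = (starRingEnd ℂ) (ξ ^ ((j : ℕ) + 1)) := by
        have hi' := hγ _ (hmem i)
        have hj' := hγ _ (hmem j)
        simpa [hτdef, hi', hj'] using h1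
      have h3 : ξ ^ ((i : ℕ) + 1) = ξ ^ ((j : ℕ) + 1) := (starRingEnd ℂ).injective h2
      have h4 := hξ.pow_inj (by have := i.isLt; omega) (by have := j.isLt; omega) h3
      exact Fin.ext (by omega)
    have hLI := (linearIndependent_monoidHom (↥(Rzx n ξ)) ℂ).comp _ hinj
    rw [Fintype.linearIndependent_iff] at hLI
    refine hLI g ?_
    funext x
    simpa using hall x
  have hunit : IsUnit T := Matrix.linearIndependent_rows_iff_isUnit.1 hrows
  -- T *ᵥ c = 0
  have hTc : T.mulVec c = 0 := by
    funext i
    have := h0 ((i : ℕ) + 1) (hmem i)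
    simpa [Matrix.mulVec, dotProduct, mul_comm] using this
  have hc0 : c = 0 := by
    have hinj2 := Matrix.mulVec_injective_iff_isUnit.2 hunit
    have : T.mulVec c = T.mulVec 0 := by rw [hTc]; simp [Matrix.mulVec_zero]
    exact hinj2 this
  -- conclude
  funext k l
  have hcl : ∑ k, (M k l - N k l) * (α k : ℂ) = 0 := by
    have := congrFun hc0 l
    simp only [hcdef, Pi.zero_apply] at this
    rw [← this]
    exact Finset.sum_congr rfl fun k _ => by ring
  have := hind (fun k => M k l - N k l) (fun k => Subring.sub_mem _ (hM k l) (hN k l)) hcl k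
  exact sub_eq_zero.1 this
end
end

section
/- Let 𝔞 ⊆ ℤ[1/n][ξ] be an ideal and a, b ∈ ℤ[1/n][ξ] nonzero with 𝔞𝔞̄ = (a) = (b). Then [𝔞, a] = [𝔞, b] if and only if a/b ∈ N(ℤ[1/n][ξ]*), i.e. a/b = uū for some unit u of ℤ[1/n][ξ]. -/
open scoped ComplexConjugate

noncomputable section

/-- Complex conjugation restricted to a conjugation-stable subring of `ℂ`. -/
def conjHom (S : Subring ℂ) (hc : ∀ y ∈ S, (starRingEnd ℂ) y ∈ S) : ↥S →+* ↥S :=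
  RingHom.codRestrict ((starRingEnd ℂ).comp S.subtype) S (fun y => hc y y.2)

/-- The equivalence relation on pairs: `(𝔞,a) ∼ (𝔟,b)` iff there are nonzero `λ, μ` with
`λ𝔞 = μ𝔟` and `λλ̄a = μμ̄b`. -/
def PairRel (S : Subring ℂ) (cR : ↥S →+* ↥S) (A B : Ideal ↥S × ↥S) : Prop :=
  ∃ lam mu : ↥S, lam ≠ 0 ∧ mu ≠ 0 ∧
    Ideal.span {lam} * A.1 = Ideal.span {mu} * B.1 ∧
    lam * cR lam * A.2 = mu * cR mu * B.2


set_option maxHeartbeats 1000000 in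
set_option synthInstance.maxHeartbeats 1000000 in
lemma stmt7_aux (S : Subring ℂ) (hc : ∀ y ∈ S, (starRingEnd ℂ) y ∈ S)
    (𝔞 : Ideal ↥S) (a b : ↥S) (ha : a ≠ 0) (hb : b ≠ 0)
    (hpa : 𝔞 * 𝔞.map (conjHom S hc) = Ideal.span {a}) :
    PairRel S (conjHom S hc) (𝔞, a) (𝔞, b) ↔
      ∃ u : (↥S)ˣ,
        (a : ℂ) / (b : ℂ) = ((u : ↥S) : ℂ) * (starRingEnd ℂ) ((u : ↥S) : ℂ) := by
  have hcoe : ∀ x : ↥S, ((conjHom S hc x : ↥S) : ℂ) = (starRingEnd ℂ) (x : ℂ) :=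
    fun x => rfl
  have hbC : (b : ℂ) ≠ 0 := fun h => hb (Subtype.ext h)
  constructor
  · rintro ⟨lam, mu, hlam, hmu, hI, hE⟩
    simp only at hI hE
    have h : Ideal.span {lam} * (𝔞 * 𝔞.map (conjHom S hc))
        = Ideal.span {mu} * (𝔞 * 𝔞.map (conjHom S hc)) := by
      rw [← mul_assoc (G := Ideal ↥S), ← mul_assoc (G := Ideal ↥S), hI]
    rw [hpa, Ideal.span_singleton_mul_span_singleton,
      Ideal.span_singleton_mul_span_singleton] at h
    have hass : Associated (lam * a) (mu * a) :=
      Ideal.span_singleton_eq_span_singleton.mp h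
    obtain ⟨w, hw⟩ := hass
    have hmu_eq : lam * ↑w = mu := by
      apply mul_right_cancel₀ ha
      rw [← hw]; ring
    have hclam : conjHom S hc lam ≠ 0 := by
      intro h0
      apply hlam
      have h1 := congrArg Subtype.val h0
      rw [hcoe] at h1
      exact Subtype.ext (by simpa using h1)
    have hE2 : a = ↑w * conjHom S hc ↑w * b := by
      rw [← hmu_eq, map_mul] at hE
      apply mul_left_cancel₀ (mul_ne_zero hlam hclam)
      rw [hE]; ring
    refine ⟨w, ?_⟩
    have h2 := congrArg Subtype.val hE2
    push_cast at h2
    rw [hcoe] at h2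
    rw [h2]
    field_simp
  · rintro ⟨u, hu⟩
    have hE2 : a = ↑u * conjHom S hc ↑u * b := by
      apply Subtype.ext
      push_cast
      rw [hcoe]
      field_simp at hu
      rw [hu]; ring
    refine ⟨1, ↑u, one_ne_zero, Units.ne_zero u, ?_, ?_⟩
    · simp [Ideal.span_singleton_one, Ideal.span_singleton_eq_top.mpr u.isUnit]
    · simpa using hE2

set_option maxHeartbeats 1000000 in
set_option synthInstance.maxHeartbeats 1000000 in
/-- Let `p` be an odd prime, `ξ` a primitive `p`-th root of unity,
`0 ≠ n ∈ ℤ`.  Let `𝔞 ⊆ ℤ[1/n][ξ]` be an ideal and `a, b ≠ 0` with `𝔞𝔞̄ = (a) = (b)`.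
Then `[𝔞, a] = [𝔞, b]` iff `a/b = uū` for some unit `u` of `ℤ[1/n][ξ]`. -/
theorem stmt7 (p : ℕ) (hp : p.Prime) (hodd : Odd p) (n : ℤ) (hn : n ≠ 0)
    (ξ : ℂ) (hξ : IsPrimitiveRoot ξ p)
    (hc : ∀ y ∈ Rzx n ξ, (starRingEnd ℂ) y ∈ Rzx n ξ)
    (𝔞 : Ideal ↥(Rzx n ξ)) (a b : ↥(Rzx n ξ)) (ha : a ≠ 0) (hb : b ≠ 0)
    (hpa : 𝔞 * 𝔞.map (conjHom (Rzx n ξ) hc) = Ideal.span {a})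
    (hpb : 𝔞 * 𝔞.map (conjHom (Rzx n ξ) hc) = Ideal.span {b}) :
    PairRel (Rzx n ξ) (conjHom (Rzx n ξ) hc) (𝔞, a) (𝔞, b) ↔
      ∃ u : (↥(Rzx n ξ))ˣ,
        (a : ℂ) / (b : ℂ) =
          ((u : ↥(Rzx n ξ)) : ℂ) * (starRingEnd ℂ) ((u : ↥(Rzx n ξ)) : ℂ) := by
  exact stmt7_aux (Rzx n ξ) hc 𝔞 a b ha hb hpa
end
end
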